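/- Let k be a field and let O_X ⊆ k[v,w] be the k-subalgebra generated by the monomials vw, vw², vw³, vw⁴, v³w². Then O_X is isomorphic to K[Y,Z,T,U₁,U₂]/I, where Y,Z,T,U₁,U₂ have degrees 2,3,4,5,5 and I = (Z² − YT, ZT − YU₁, Y⁴ − ZU₂, T² − ZU₁, Y³Z − TU₂, Y³T − U₁U₂), via Y ↦ vw, Z ↦ vw², T ↦ vw³, U₁ ↦ vw⁴, U₂ ↦ v³w². -/

import Mathlib

open MvPolynomial Finsupp

namespace ReidSuzukiAux

variable (k : Type*) [Field k]

/-- The ideal `I`. -/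
noncomputable abbrev II : Ideal (MvPolynomial (Fin 5) k) :=
  Ideal.span {X 1 ^ 2 - X 0 * X 2,
        X 1 * X 2 - X 0 * X 3,
        X 0 ^ 4 - X 1 * X 4,
        X 2 ^ 2 - X 1 * X 3,
        X 0 ^ 3 * X 1 - X 2 * X 4,
        X 0 ^ 3 * X 2 - X 3 * X 4}

/-- the `v`-degree of the image of a monomial -/
def Pdeg (m : Fin 5 →₀ ℕ) : ℕ := m 0 + m 1 + m 2 + m 3 + 3 * m 4

/-- the `w`-degree of the image of a monomial -/
def Qdeg (m : Fin 5 →₀ ℕ) : ℕ := m 0 + 2 * m 1 + 3 * m 2 + 4 * m 3 + 2 * m 4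

/-- image exponent of a monomial exponent -/
noncomputable def E (m : Fin 5 →₀ ℕ) : Fin 2 →₀ ℕ := single 0 (Pdeg m) + single 1 (Qdeg m)

/-- irreducible (normal-form) monomial exponents -/
def Irr (m : Fin 5 →₀ ℕ) : Prop :=
  m 1 ≤ 1 ∧ m 2 ≤ 1 ∧ ¬(1 ≤ m 1 ∧ 1 ≤ m 2) ∧ m 0 ≤ 3 ∧
    ¬(3 ≤ m 0 ∧ 1 ≤ m 1) ∧ ¬(3 ≤ m 0 ∧ 1 ≤ m 2)

lemma E_apply0 (m : Fin 5 →₀ ℕ) : E m 0 = Pdeg m := by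
  simp [E, Finsupp.single_apply]

lemma E_apply1 (m : Fin 5 →₀ ℕ) : E m 1 = Qdeg m := by
  simp [E, Finsupp.single_apply]

lemma arith (a b c d e a' b' c' d' e' : ℕ)
    (a1 : b ≤ 1) (a2 : c ≤ 1) (a3 : ¬(1 ≤ b ∧ 1 ≤ c)) (a4 : a ≤ 3)
    (a5 : ¬(3 ≤ a ∧ 1 ≤ b)) (a6 : ¬(3 ≤ a ∧ 1 ≤ c))
    (b1 : b' ≤ 1) (b2 : c' ≤ 1) (b3 : ¬(1 ≤ b' ∧ 1 ≤ c')) (b4 : a' ≤ 3)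
    (b5 : ¬(3 ≤ a' ∧ 1 ≤ b')) (b6 : ¬(3 ≤ a' ∧ 1 ≤ c'))
    (hP : a + b + c + d + 3 * e = a' + b' + c' + d' + 3 * e')
    (hQ : a + 2 * b + 3 * c + 4 * d + 2 * e = a' + 2 * b' + 3 * c' + 4 * d' + 2 * e') :
    a = a' ∧ b = b' ∧ c = c' ∧ d = d' ∧ e = e' := by
  interval_cases a <;> interval_cases b <;> interval_cases c <;>
    interval_cases a' <;> interval_cases b' <;> interval_cases c' <;> omega

lemma irr_unique {m m' : Fin 5 →₀ ℕ} (h1 : Irr m) (h2 : Irr m') (h : E m = E m') :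
    m = m' := by
  have hP : Pdeg m = Pdeg m' := by
    rw [← E_apply0, ← E_apply0, h]
  have hQ : Qdeg m = Qdeg m' := by
    rw [← E_apply1, ← E_apply1, h]
  obtain ⟨a1, a2, a3, a4, a5, a6⟩ := h1
  obtain ⟨b1, b2, b3, b4, b5, b6⟩ := h2
  unfold Pdeg at hP
  unfold Qdeg at hQ
  have key : m 0 = m' 0 ∧ m 1 = m' 1 ∧ m 2 = m' 2 ∧ m 3 = m' 3 ∧ m 4 = m' 4 :=
    arith (m 0) (m 1) (m 2) (m 3) (m 4) (m' 0) (m' 1) (m' 2) (m' 3) (m' 4)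
      a1 a2 a3 a4 a5 a6 b1 b2 b3 b4 b5 b6 hP hQ
  ext j
  fin_cases j
  · exact key.1
  · exact key.2.1
  · exact key.2.2.1
  · exact key.2.2.2.1
  · exact key.2.2.2.2

open Classical in
noncomputable def nf (s : Fin 2 →₀ ℕ) : Fin 5 →₀ ℕ :=
  if h : ∃ m, Irr m ∧ E m = s then h.choose else 0

lemma nf_eq_self {m : Fin 5 →₀ ℕ} (h : Irr m) : nf (E m) = m := by
  have hex : ∃ m', Irr m' ∧ E m' = E m := ⟨m, h, rfl⟩
  classical
  rw [nf, dif_pos hex]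
  exact irr_unique hex.choose_spec.1 h hex.choose_spec.2

variable {k}

lemma step {m l r : Fin 5 →₀ ℕ} (hle : l ≤ m)
    (hg : (monomial l 1 - monomial r 1 : MvPolynomial (Fin 5) k) ∈ II k) :
    (monomial m 1 - monomial (m - l + r) 1 : MvPolynomial (Fin 5) k) ∈ II k := by
  have hm : m - l + l = m := tsub_add_cancel_of_le hle
  have heq : (monomial m 1 - monomial (m - l + r) 1 : MvPolynomial (Fin 5) k)
      = monomial (m - l) 1 * (monomial l 1 - monomial r 1) := by
    rw [mul_sub, monomial_mul, monomial_mul, mul_one, hm]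
  rw [heq]
  exact Ideal.mul_mem_left _ _ hg

lemma mem1 : (monomial (single 1 2) 1 - monomial (single 0 1 + single 2 1) 1 :
    MvPolynomial (Fin 5) k) ∈ II k := by
  have : (monomial (single 1 2) 1 - monomial (single 0 1 + single 2 1) 1 :
      MvPolynomial (Fin 5) k) = X 1 ^ 2 - X 0 * X 2 := by
    simp only [monomial_single_add, ← X_pow_eq_monomial, pow_one]
  rw [this]
  exact Ideal.subset_span (Set.mem_insert _ _)

lemma mem2 : (monomial (single 1 1 + single 2 1) 1 - monomial (single 0 1 + single 3 1) 1 :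
    MvPolynomial (Fin 5) k) ∈ II k := by
  have : (monomial (single 1 1 + single 2 1) 1 - monomial (single 0 1 + single 3 1) 1 :
      MvPolynomial (Fin 5) k) = X 1 * X 2 - X 0 * X 3 := by
    simp only [monomial_single_add, ← X_pow_eq_monomial, pow_one]
  rw [this]
  exact Ideal.subset_span (Set.mem_insert_of_mem _ (Set.mem_insert _ _))

lemma mem3 : (monomial (single 0 4) 1 - monomial (single 1 1 + single 4 1) 1 :
    MvPolynomial (Fin 5) k) ∈ II k := by
  have : (monomial (single 0 4) 1 - monomial (single 1 1 + single 4 1) 1 :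
      MvPolynomial (Fin 5) k) = X 0 ^ 4 - X 1 * X 4 := by
    simp only [monomial_single_add, ← X_pow_eq_monomial, pow_one]
  rw [this]
  exact Ideal.subset_span (Set.mem_insert_of_mem _ (Set.mem_insert_of_mem _
    (Set.mem_insert _ _)))

lemma mem4 : (monomial (single 2 2) 1 - monomial (single 1 1 + single 3 1) 1 :
    MvPolynomial (Fin 5) k) ∈ II k := by
  have : (monomial (single 2 2) 1 - monomial (single 1 1 + single 3 1) 1 :
      MvPolynomial (Fin 5) k) = X 2 ^ 2 - X 1 * X 3 := by
    simp only [monomial_single_add, ← X_pow_eq_monomial, pow_one]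
  rw [this]
  exact Ideal.subset_span (Set.mem_insert_of_mem _ (Set.mem_insert_of_mem _
    (Set.mem_insert_of_mem _ (Set.mem_insert _ _))))

lemma mem5 : (monomial (single 0 3 + single 1 1) 1 - monomial (single 2 1 + single 4 1) 1 :
    MvPolynomial (Fin 5) k) ∈ II k := by
  have : (monomial (single 0 3 + single 1 1) 1 - monomial (single 2 1 + single 4 1) 1 :
      MvPolynomial (Fin 5) k) = X 0 ^ 3 * X 1 - X 2 * X 4 := by
    simp only [monomial_single_add, ← X_pow_eq_monomial, pow_one]
  rw [this]
  exact Ideal.subset_span (Set.mem_insert_of_mem _ (Set.mem_insert_of_mem _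
    (Set.mem_insert_of_mem _ (Set.mem_insert_of_mem _ (Set.mem_insert _ _)))))

lemma mem6 : (monomial (single 0 3 + single 2 1) 1 - monomial (single 3 1 + single 4 1) 1 :
    MvPolynomial (Fin 5) k) ∈ II k := by
  have : (monomial (single 0 3 + single 2 1) 1 - monomial (single 3 1 + single 4 1) 1 :
      MvPolynomial (Fin 5) k) = X 0 ^ 3 * X 2 - X 3 * X 4 := by
    simp only [monomial_single_add, ← X_pow_eq_monomial, pow_one]
  rw [this]
  exact Ideal.subset_span (Set.mem_insert_of_mem _ (Set.mem_insert_of_mem _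
    (Set.mem_insert_of_mem _ (Set.mem_insert_of_mem _ (Set.mem_insert_of_mem _ rfl)))))

lemma irr_case {m : Fin 5 →₀ ℕ} (h : Irr m) :
    (monomial m 1 - monomial (nf (E m)) 1 : MvPolynomial (Fin 5) k) ∈ II k := by
  rw [nf_eq_self h, sub_self]
  exact zero_mem _

lemma key : ∀ (n : ℕ) (m : Fin 5 →₀ ℕ), 3 * m 0 + 4 * m 1 + 3 * m 2 ≤ n →
    (monomial m 1 - monomial (nf (E m)) 1 : MvPolynomial (Fin 5) k) ∈ II k := by
  intro n
  induction n with
  | zero =>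
    intro m hm
    exact irr_case ⟨by omega, by omega, by omega, by omega, by omega, by omega⟩
  | succ n IH =>
    intro m hm
    by_cases h1 : 2 ≤ m 1
    · -- use Z² - YT
      have hle : single 1 2 ≤ m := by
        rw [Finsupp.single_le_iff]; exact h1
      have hstep := step hle (mem1 (k := k))
      set m' : Fin 5 →₀ ℕ := m - single 1 2 + (single 0 1 + single 2 1) with hm'
      have c0 : m' 0 = m 0 + 1 := by
        simp [hm', Finsupp.tsub_apply, Finsupp.single_apply]
      have c1 : m' 1 = m 1 - 2 := by
        simp [hm', Finsupp.tsub_apply, Finsupp.single_apply]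
      have c2 : m' 2 = m 2 + 1 := by
        simp [hm', Finsupp.tsub_apply, Finsupp.single_apply]
      have c3 : m' 3 = m 3 := by
        simp [hm', Finsupp.tsub_apply, Finsupp.single_apply]
      have c4 : m' 4 = m 4 := by
        simp [hm', Finsupp.tsub_apply, Finsupp.single_apply]
      have hE : E m' = E m := by
        unfold E Pdeg Qdeg
        rw [c0, c1, c2, c3, c4]
        congr 2 <;> omega
      have hIH := IH m' (by rw [c0, c1, c2]; omega)
      rw [hE] at hIH
      have := (II k).add_mem hstep hIH
      rwa [sub_add_sub_cancel] at this
    · by_cases h2 : 1 ≤ m 1 ∧ 1 ≤ m 2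
      · -- use ZT - YU₁
        have hle : single 1 1 + single 2 1 ≤ m := by
          rw [Finsupp.le_iff]
          intro j _
          fin_cases j <;> simp [Finsupp.single_apply] <;> omega
        have hstep := step hle (mem2 (k := k))
        set m' : Fin 5 →₀ ℕ := m - (single 1 1 + single 2 1) + (single 0 1 + single 3 1)
          with hm'
        have c0 : m' 0 = m 0 + 1 := by
          simp [hm', Finsupp.tsub_apply, Finsupp.single_apply]
        have c1 : m' 1 = m 1 - 1 := by
          simp [hm', Finsupp.tsub_apply, Finsupp.single_apply]
        have c2 : m' 2 = m 2 - 1 := by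
          simp [hm', Finsupp.tsub_apply, Finsupp.single_apply]
        have c3 : m' 3 = m 3 + 1 := by
          simp [hm', Finsupp.tsub_apply, Finsupp.single_apply]
        have c4 : m' 4 = m 4 := by
          simp [hm', Finsupp.tsub_apply, Finsupp.single_apply]
        have hE : E m' = E m := by
          unfold E Pdeg Qdeg
          rw [c0, c1, c2, c3, c4]
          congr 2 <;> omega
        have hIH := IH m' (by rw [c0, c1, c2]; omega)
        rw [hE] at hIH
        have := (II k).add_mem hstep hIH
        rwa [sub_add_sub_cancel] at this
      · by_cases h3 : 4 ≤ m 0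
        · -- use Y⁴ - ZU₂
          have hle : single 0 4 ≤ m := by
            rw [Finsupp.single_le_iff]; exact h3
          have hstep := step hle (mem3 (k := k))
          set m' : Fin 5 →₀ ℕ := m - single 0 4 + (single 1 1 + single 4 1) with hm'
          have c0 : m' 0 = m 0 - 4 := by
            simp [hm', Finsupp.tsub_apply, Finsupp.single_apply]
          have c1 : m' 1 = m 1 + 1 := by
            simp [hm', Finsupp.tsub_apply, Finsupp.single_apply]
          have c2 : m' 2 = m 2 := by
            simp [hm', Finsupp.tsub_apply, Finsupp.single_apply]
          have c3 : m' 3 = m 3 := by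
            simp [hm', Finsupp.tsub_apply, Finsupp.single_apply]
          have c4 : m' 4 = m 4 + 1 := by
            simp [hm', Finsupp.tsub_apply, Finsupp.single_apply]
          have hE : E m' = E m := by
            unfold E Pdeg Qdeg
            rw [c0, c1, c2, c3, c4]
            congr 2 <;> omega
          have hIH := IH m' (by rw [c0, c1, c2]; omega)
          rw [hE] at hIH
          have := (II k).add_mem hstep hIH
          rwa [sub_add_sub_cancel] at this
        · by_cases h4 : 2 ≤ m 2
          · -- use T² - ZU₁
            have hle : single 2 2 ≤ m := by
              rw [Finsupp.single_le_iff]; exact h4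
            have hstep := step hle (mem4 (k := k))
            set m' : Fin 5 →₀ ℕ := m - single 2 2 + (single 1 1 + single 3 1) with hm'
            have c0 : m' 0 = m 0 := by
              simp [hm', Finsupp.tsub_apply, Finsupp.single_apply]
            have c1 : m' 1 = m 1 + 1 := by
              simp [hm', Finsupp.tsub_apply, Finsupp.single_apply]
            have c2 : m' 2 = m 2 - 2 := by
              simp [hm', Finsupp.tsub_apply, Finsupp.single_apply]
            have c3 : m' 3 = m 3 + 1 := by
              simp [hm', Finsupp.tsub_apply, Finsupp.single_apply]
            have c4 : m' 4 = m 4 := by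
              simp [hm', Finsupp.tsub_apply, Finsupp.single_apply]
            have hE : E m' = E m := by
              unfold E Pdeg Qdeg
              rw [c0, c1, c2, c3, c4]
              congr 2 <;> omega
            have hIH := IH m' (by rw [c0, c1, c2]; omega)
            rw [hE] at hIH
            have := (II k).add_mem hstep hIH
            rwa [sub_add_sub_cancel] at this
          · by_cases h5 : 3 ≤ m 0 ∧ 1 ≤ m 1
            · -- use Y³Z - TU₂
              have hle : single 0 3 + single 1 1 ≤ m := by
                rw [Finsupp.le_iff]
                intro j _
                fin_cases j <;> simp [Finsupp.single_apply] <;> omega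
              have hstep := step hle (mem5 (k := k))
              set m' : Fin 5 →₀ ℕ := m - (single 0 3 + single 1 1) +
                (single 2 1 + single 4 1) with hm'
              have c0 : m' 0 = m 0 - 3 := by
                simp [hm', Finsupp.tsub_apply, Finsupp.single_apply]
              have c1 : m' 1 = m 1 - 1 := by
                simp [hm', Finsupp.tsub_apply, Finsupp.single_apply]
              have c2 : m' 2 = m 2 + 1 := by
                simp [hm', Finsupp.tsub_apply, Finsupp.single_apply]
              have c3 : m' 3 = m 3 := by
                simp [hm', Finsupp.tsub_apply, Finsupp.single_apply]
              have c4 : m' 4 = m 4 + 1 := by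
                simp [hm', Finsupp.tsub_apply, Finsupp.single_apply]
              have hE : E m' = E m := by
                unfold E Pdeg Qdeg
                rw [c0, c1, c2, c3, c4]
                congr 2 <;> omega
              have hIH := IH m' (by rw [c0, c1, c2]; omega)
              rw [hE] at hIH
              have := (II k).add_mem hstep hIH
              rwa [sub_add_sub_cancel] at this
            · by_cases h6 : 3 ≤ m 0 ∧ 1 ≤ m 2
              · -- use Y³T - U₁U₂
                have hle : single 0 3 + single 2 1 ≤ m := by
                  rw [Finsupp.le_iff]
                  intro j _
                  fin_cases j <;> simp [Finsupp.single_apply] <;> omega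
                have hstep := step hle (mem6 (k := k))
                set m' : Fin 5 →₀ ℕ := m - (single 0 3 + single 2 1) +
                  (single 3 1 + single 4 1) with hm'
                have c0 : m' 0 = m 0 - 3 := by
                  simp [hm', Finsupp.tsub_apply, Finsupp.single_apply]
                have c1 : m' 1 = m 1 := by
                  simp [hm', Finsupp.tsub_apply, Finsupp.single_apply]
                have c2 : m' 2 = m 2 - 1 := by
                  simp [hm', Finsupp.tsub_apply, Finsupp.single_apply]
                have c3 : m' 3 = m 3 + 1 := by
                  simp [hm', Finsupp.tsub_apply, Finsupp.single_apply]
                have c4 : m' 4 = m 4 + 1 := by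
                  simp [hm', Finsupp.tsub_apply, Finsupp.single_apply]
                have hE : E m' = E m := by
                  unfold E Pdeg Qdeg
                  rw [c0, c1, c2, c3, c4]
                  congr 2 <;> omega
                have hIH := IH m' (by rw [c0, c1, c2]; omega)
                rw [hE] at hIH
                have := (II k).add_mem hstep hIH
                rwa [sub_add_sub_cancel] at this
              · exact irr_case ⟨by omega, by omega, h2, by omega, h5, h6⟩

/-- the ambient map, as in the theorem statement -/
noncomputable def phi : MvPolynomial (Fin 5) k →ₐ[k] MvPolynomial (Fin 2) k :=
  aeval (fun j : Fin 5 =>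
    (![X 0 * X 1, X 0 * X 1 ^ 2, X 0 * X 1 ^ 3, X 0 * X 1 ^ 4,
        X 0 ^ 3 * X 1 ^ 2] : Fin 5 → MvPolynomial (Fin 2) k) j)

/-- `mapDomain E`, typed on `MvPolynomial` -/
noncomputable def EMap (f : MvPolynomial (Fin 5) k) : MvPolynomial (Fin 2) k :=
  AddMonoidAlgebra.mapDomain E f

/-- `mapDomain (nf ∘ E)`, typed on `MvPolynomial` -/
noncomputable def nfMap (f : MvPolynomial (Fin 5) k) : MvPolynomial (Fin 5) k :=
  AddMonoidAlgebra.mapDomain (fun m => nf (E m)) f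

lemma phi_monomial (m : Fin 5 →₀ ℕ) (c : k) :
    phi (monomial m c) = monomial (E m) c := by
  rw [phi, aeval_monomial, Finsupp.prod_fintype _ _ (fun i => pow_zero _),
    Fin.prod_univ_five]
  simp only [Matrix.cons_val_zero, Matrix.cons_val_one, Matrix.head_cons,
    Matrix.cons_val_two, Matrix.tail_cons, Matrix.cons_val_three, Matrix.cons_val_four]
  have hrhs : (monomial (E m) c : MvPolynomial (Fin 2) k)
      = C c * (X 0 ^ Pdeg m * X 1 ^ Qdeg m) := by
    rw [E, monomial_single_add, ← C_mul_X_pow_eq_monomial]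
    ring
  rw [hrhs, algebraMap_eq, Pdeg, Qdeg]
  ring

lemma EMap_mono (u : Fin 5 →₀ ℕ) (a : k) :
    EMap (monomial u a) = monomial (E u) a :=
  AddMonoidAlgebra.mapDomain_single

lemma nfMap_mono (u : Fin 5 →₀ ℕ) (a : k) :
    nfMap (monomial u a) = monomial (nf (E u)) a :=
  AddMonoidAlgebra.mapDomain_single

lemma EMap_add (p q : MvPolynomial (Fin 5) k) : EMap (p + q) = EMap p + EMap q :=
  AddMonoidAlgebra.mapDomain_add _ _ _

lemma nfMap_add (p q : MvPolynomial (Fin 5) k) : nfMap (p + q) = nfMap p + nfMap q :=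
  AddMonoidAlgebra.mapDomain_add _ _ _

lemma EMap_eq_phi (f : MvPolynomial (Fin 5) k) : EMap f = phi f := by
  induction f using MvPolynomial.induction_on' with
  | monomial u a => rw [phi_monomial, EMap_mono]
  | add p q hp hq => rw [EMap_add, map_add, hp, hq]

lemma sub_nf_mem (f : MvPolynomial (Fin 5) k) : f - nfMap f ∈ II k := by
  induction f using MvPolynomial.induction_on' with
  | monomial u a =>
    rw [nfMap_mono]
    have heq : (monomial u a - monomial (nf (E u)) a : MvPolynomial (Fin 5) k)
        = C a * (monomial u 1 - monomial (nf (E u)) 1) := by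
      rw [mul_sub, C_mul_monomial, C_mul_monomial, mul_one]
    rw [heq]
    exact Ideal.mul_mem_left _ _ (key (3 * u 0 + 4 * u 1 + 3 * u 2) u le_rfl)
  | add p q hp hq =>
    rw [nfMap_add]
    have heq : p + q - (nfMap p + nfMap q) = (p - nfMap p) + (q - nfMap q) := by ring
    rw [heq]
    exact add_mem hp hq

lemma nfMap_eq (f : MvPolynomial (Fin 5) k) :
    nfMap f = AddMonoidAlgebra.mapDomain nf (EMap f) := by
  unfold nfMap EMap
  unfold AddMonoidAlgebra.mapDomain
  rw [AddMonoidAlgebra.coeff_ofCoeff, ← Finsupp.mapDomain_comp]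
  rfl

end ReidSuzukiAux

open ReidSuzukiAux in
/-- the subring of `k[v,w]` generated by `vw, vw², vw³, vw⁴, v³w²`
is `K[Y,Z,T,U₁,U₂]/I`: i.e. the kernel of the map `K[Y,Z,T,U₁,U₂] → k[v,w]`,
`Y,Z,T,U₁,U₂ ↦ vw, vw², vw³, vw⁴, v³w²`, is the stated ideal `I`.
(Variables: `0 = Y, 1 = Z, 2 = T, 3 = U₁, 4 = U₂`; `v = X 0`, `w = X 1`.) -/
theorem reid_suzuki_OX_presentation
    (k : Type*) [Field k] :
    RingHom.ker ((aeval (fun j : Fin 5 =>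
        (![X 0 * X 1, X 0 * X 1 ^ 2, X 0 * X 1 ^ 3, X 0 * X 1 ^ 4,
            X 0 ^ 3 * X 1 ^ 2] : Fin 5 → MvPolynomial (Fin 2) k) j) :
          MvPolynomial (Fin 5) k →ₐ[k] MvPolynomial (Fin 2) k).toRingHom) =
      Ideal.span {X 1 ^ 2 - X 0 * X 2,
        X 1 * X 2 - X 0 * X 3,
        X 0 ^ 4 - X 1 * X 4,
        X 2 ^ 2 - X 1 * X 3,
        X 0 ^ 3 * X 1 - X 2 * X 4,
        X 0 ^ 3 * X 2 - X 3 * X 4} := by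
  apply le_antisymm
  · -- ker ⊆ I
    intro f hf
    rw [RingHom.mem_ker] at hf
    have hphi : phi f = 0 := hf
    have h2 : nfMap f = 0 := by
      rw [nfMap_eq, EMap_eq_phi, hphi]
      exact AddMonoidAlgebra.mapDomain_zero _
    have hmem := sub_nf_mem f
    rw [h2, sub_zero] at hmem
    exact hmem
  · -- I ⊆ ker
    rw [Ideal.span_le]
    rintro x hx
    simp only [Set.mem_insert_iff, Set.mem_singleton_iff] at hx
    rcases hx with rfl | rfl | rfl | rfl | rfl | rfl <;>
      · simp only [SetLike.mem_coe, RingHom.mem_ker, AlgHom.toRingHom_eq_coe,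
          RingHom.coe_coe, map_sub, map_mul, map_pow, aeval_X,
          Matrix.cons_val_zero, Matrix.cons_val_one, Matrix.head_cons,
          Matrix.cons_val_two, Matrix.tail_cons, Matrix.cons_val_three,
          Matrix.cons_val_four]
        ring
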